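/- For all 0 < s < 1, one has q(s) ≥ (4/√(2π))·s(1−s), i.e. the function q dominates the parabola h(s) = 4·s(1−s)·q(1/2) with equality at s ∈ {0, 1/2, 1} (interpreting q at the endpoints by its limits q(0)=q(1)=0). -/

import Mathlib

open MeasureTheory ProbabilityTheory Real Set Filter

noncomputable def gamma1 : Measure ℝ := gaussianReal 0 1

noncomputable def Phi (t : ℝ) : ℝ :=
  ∫ s in Set.Iic t, (Real.sqrt (2 * Real.pi))⁻¹ * Real.exp (-s ^ 2 / 2)

noncomputable def Psi : ℝ → ℝ := Function.invFun Phi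
noncomputable def q2 (s : ℝ) : ℝ := (Real.sqrt (2 * Real.pi))⁻¹ * Real.exp (-(Psi s) ^ 2 / 2)

noncomputable def gf (s : ℝ) : ℝ := (Real.sqrt (2 * Real.pi))⁻¹ * Real.exp (-s ^ 2 / 2)

lemma gf_eq (s : ℝ) : gf s = (Real.sqrt (2 * Real.pi))⁻¹ * Real.exp (-(1/2) * s ^ 2) := by
  unfold gf; ring_nf

lemma sqrt2pi_pos : 0 < Real.sqrt (2 * Real.pi) := Real.sqrt_pos.2 (by positivity)

lemma gf_pos (s : ℝ) : 0 < gf s := by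
  unfold gf; positivity

lemma gf_cont : Continuous gf := by
  unfold gf; continuity

set_option maxHeartbeats 1000000 in
lemma gf_integrable : Integrable gf := by
  have h : Integrable fun s : ℝ => Real.exp (-(1/2) * s ^ 2) :=
    integrable_exp_neg_mul_sq (by norm_num)
  have h3 : gf = fun s => (Real.sqrt (2 * π))⁻¹ * Real.exp (-(1/2) * s ^ 2) :=
    funext gf_eq
  rw [h3]
  exact h.const_mul _

lemma integral_gf : ∫ s, gf s = 1 := by
  have h := integral_gaussian (1/2 : ℝ)
  simp only [gf_eq, MeasureTheory.integral_const_mul, h]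
  rw [show (π / (1/2) : ℝ) = 2 * π by ring]
  rw [inv_mul_cancel₀ (ne_of_gt sqrt2pi_pos)]

lemma Phi_eq (t : ℝ) : Phi t = ∫ s in Set.Iic t, gf s := rfl

lemma Phi_sub {a b : ℝ} : Phi b - Phi a = ∫ s in a..b, gf s := by
  rw [Phi_eq, Phi_eq]
  exact intervalIntegral.integral_Iic_sub_Iic gf_integrable.integrableOn gf_integrable.integrableOn

lemma Phi_strictMono : StrictMono Phi := by
  intro a b hab
  have h : 0 < ∫ s in a..b, gf s := by
    apply intervalIntegral.intervalIntegral_pos_of_pos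
    · exact gf_integrable.intervalIntegrable
    · exact gf_pos
    · exact hab
  linarith [Phi_sub (a := a) (b := b)]

lemma Phi_tendsto_atBot : Tendsto Phi atBot (nhds 0) := by
  have h : Tendsto (fun t : ℝ => ∫ s in t..(0:ℝ), gf s) atBot
      (nhds (∫ s in Set.Iic (0:ℝ), gf s)) :=
    MeasureTheory.intervalIntegral_tendsto_integral_Iic (0:ℝ)
      gf_integrable.integrableOn tendsto_id
  have h2 : Tendsto (fun t : ℝ => Phi 0 - ∫ s in t..(0:ℝ), gf s) atBot
      (nhds (Phi 0 - ∫ s in Set.Iic (0:ℝ), gf s)) := (tendsto_const_nhds.sub h)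
  have h3 : (fun t : ℝ => Phi 0 - ∫ s in t..(0:ℝ), gf s) = Phi := by
    funext t
    have := Phi_sub (a := t) (b := 0)
    linarith
  rw [h3] at h2
  simpa [Phi_eq] using h2

lemma Phi_tendsto_atTop : Tendsto Phi atTop (nhds 1) := by
  have h := (MeasureTheory.aecover_Iic (μ := (volume : Measure ℝ))
    (tendsto_id (α := ℝ) (x := atTop))).integral_tendsto_of_countably_generated gf_integrable
  rw [integral_gf] at h
  exact h

lemma Phi_continuous : Continuous Phi := by
  have h : Continuous fun t : ℝ => ∫ s in (0:ℝ)..t, gf s :=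
    intervalIntegral.continuous_primitive (fun a b => gf_integrable.intervalIntegrable) 0
  have h2 : Phi = fun t : ℝ => Phi 0 + ∫ s in (0:ℝ)..t, gf s := by
    funext t
    have := Phi_sub (a := (0:ℝ)) (b := t)
    linarith
  rw [h2]
  exact continuous_const.add h

lemma Phi_pos (t : ℝ) : 0 < Phi t := by
  have h0 : (0:ℝ) ≤ Phi (t - 1) :=
    le_of_tendsto Phi_tendsto_atBot (by
      filter_upwards [eventually_le_atBot (t - 1)] with x hx
      exact (Phi_strictMono.monotone hx))
  have := Phi_strictMono (show t - 1 < t by linarith)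
  linarith

lemma Phi_lt_one (t : ℝ) : Phi t < 1 := by
  have h0 : Phi (t + 1) ≤ 1 :=
    ge_of_tendsto Phi_tendsto_atTop (by
      filter_upwards [eventually_ge_atTop (t + 1)] with x hx
      exact (Phi_strictMono.monotone hx))
  have := Phi_strictMono (show t < t + 1 by linarith)
  linarith

lemma Phi_add_compl (t : ℝ) : Phi t + (∫ s in Set.Ioi t, gf s) = 1 := by
  rw [Phi_eq, intervalIntegral.integral_Iic_add_Ioi gf_integrable.integrableOn
    gf_integrable.integrableOn, integral_gf]

lemma Phi_neg (t : ℝ) : Phi (-t) = 1 - Phi t := by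
  have h : Phi (-t) = ∫ s in Set.Ioi t, gf s := by
    rw [Phi_eq, show Set.Iic (-t) = Set.Iic (-t) from rfl]
    have : (∫ s in Set.Iic (-t), gf s) = ∫ s in Set.Iic (-t), gf (-s) := by
      apply setIntegral_congr_fun measurableSet_Iic
      intro s _
      unfold gf; ring_nf
    rw [this, integral_comp_neg_Iic, neg_neg]
  have := Phi_add_compl t
  linarith

lemma Phi_zero : Phi 0 = 1/2 := by
  have := Phi_neg 0
  rw [neg_zero] at this
  linarith

lemma Phi_surjOn : ∀ s ∈ Set.Ioo (0:ℝ) 1, ∃ t, Phi t = s := by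
  intro s hs
  have h1 : ∀ᶠ x in atBot, Phi x < s := Phi_tendsto_atBot.eventually_lt_const hs.1
  have h2 : ∀ᶠ x in atTop, s < Phi x := Phi_tendsto_atTop.eventually_const_lt hs.2
  obtain ⟨a, ha⟩ := h1.exists
  obtain ⟨b, hb⟩ := h2.exists
  have hab : a ≤ b := by
    by_contra h
    push_neg at h
    have := Phi_strictMono h
    linarith
  obtain ⟨t, _, ht⟩ := intermediate_value_Icc hab Phi_continuous.continuousOn
    (show s ∈ Set.Icc (Phi a) (Phi b) from ⟨ha.le, hb.le⟩)
  exact ⟨t, ht⟩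

noncomputable def II (x : ℝ) : ℝ := ∫ u in (0:ℝ)..x, Real.exp (-u ^ 2 / 2)

lemma e_integrable : Integrable (fun u : ℝ => Real.exp (-u ^ 2 / 2)) := by
  have : Integrable fun s : ℝ => Real.exp (-(1/2) * s ^ 2) :=
    integrable_exp_neg_mul_sq (by norm_num)
  apply this.congr
  filter_upwards with s
  ring_nf

lemma e_cont : Continuous (fun u : ℝ => Real.exp (-u ^ 2 / 2)) := by continuity

lemma II_hasDeriv (x : ℝ) : HasDerivAt II (Real.exp (-x ^ 2 / 2)) x := by
  exact intervalIntegral.integral_hasDerivAt_right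
    (e_integrable.intervalIntegrable)
    (e_cont.stronglyMeasurableAtFilter _ _)
    e_cont.continuousAt

lemma II_tendsto : Tendsto II atTop (nhds (Real.sqrt (2 * π) / 2)) := by
  have h := MeasureTheory.intervalIntegral_tendsto_integral_Ioi (0:ℝ)
    (e_integrable.integrableOn) (tendsto_id (α := ℝ) (x := atTop))
  have h2 : (∫ u in Set.Ioi (0:ℝ), Real.exp (-u ^ 2 / 2)) = Real.sqrt (2 * π) / 2 := by
    have := integral_gaussian_Ioi (1/2 : ℝ)
    rw [show (π / (1/2) : ℝ) = 2 * π by ring] at this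
    rw [← this]
    apply setIntegral_congr_fun measurableSet_Ioi
    intro u _
    ring_nf
  rw [h2] at h
  exact h

noncomputable def gg (x : ℝ) : ℝ := 2 * II x - (π / 2) * x
noncomputable def DD (x : ℝ) : ℝ := II x ^ 2 - (π / 2) * (1 - Real.exp (-x ^ 2 / 2))

lemma II_zero : II 0 = 0 := by simp [II]
lemma gg_zero : gg 0 = 0 := by simp [gg, II_zero]
lemma DD_zero : DD 0 = 0 := by simp [DD, II_zero]

lemma gg_hasDeriv (x : ℝ) : HasDerivAt gg (2 * Real.exp (-x ^ 2 / 2) - π / 2) x := by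
  have h1 := (II_hasDeriv x).const_mul 2
  have h2 : HasDerivAt (fun x : ℝ => (π / 2) * x) (π / 2) x := by
    simpa using (hasDerivAt_id x).const_mul (π / 2)
  exact (h1.sub h2).congr_of_eventuallyEq (Filter.Eventually.of_forall fun y => rfl)

lemma exp_hasDeriv (x : ℝ) : HasDerivAt (fun x : ℝ => Real.exp (-x ^ 2 / 2))
    (Real.exp (-x ^ 2 / 2) * (-x)) x := by
  have h : HasDerivAt (fun x : ℝ => -x ^ 2 / 2) (-x) x := by
    have := (hasDerivAt_pow 2 x).neg.div_const 2
    simpa using this.congr_deriv (by ring)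
  exact h.exp

lemma DD_hasDeriv (x : ℝ) : HasDerivAt DD (Real.exp (-x ^ 2 / 2) * gg x) x := by
  have h1 := (II_hasDeriv x).pow 2
  have h2 := ((exp_hasDeriv x).const_sub 1).const_mul (π / 2)
  have h := h1.sub h2
  apply h.congr_deriv
  simp [gg]
  ring

lemma gg_cont : Continuous gg :=
  continuous_iff_continuousAt.2 fun x => (gg_hasDeriv x).continuousAt

lemma DD_cont : Continuous DD :=
  continuous_iff_continuousAt.2 fun x => (DD_hasDeriv x).continuousAt

lemma exp_le_exp_of_sq {a b : ℝ} (ha : 0 ≤ a) (hab : a ≤ b) :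
    Real.exp (-b ^ 2 / 2) ≤ Real.exp (-a ^ 2 / 2) := by
  apply Real.exp_le_exp.2
  nlinarith

lemma DD_tendsto : Tendsto DD atTop (nhds 0) := by
  have h1 : Tendsto (fun x : ℝ => II x ^ 2) atTop (nhds ((Real.sqrt (2 * π) / 2) ^ 2)) :=
    (II_tendsto.pow 2)
  have hsq : (Real.sqrt (2 * π) / 2) ^ 2 = π / 2 := by
    rw [div_pow, Real.sq_sqrt (by positivity : (0:ℝ) ≤ 2 * π)]
    ring
  rw [hsq] at h1
  have h2 : Tendsto (fun x : ℝ => Real.exp (-x ^ 2 / 2)) atTop (nhds 0) := by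
    apply Real.tendsto_exp_atBot.comp
    have hsq2 : Tendsto (fun x : ℝ => x ^ 2) atTop atTop :=
      tendsto_pow_atTop (by norm_num)
    apply Tendsto.atBot_div_const (by norm_num)
    exact tendsto_neg_atBot_iff.2 hsq2
  have h3 : Tendsto (fun x : ℝ => (π/2) * (1 - Real.exp (-x ^ 2 / 2))) atTop
      (nhds ((π/2) * (1 - 0))) := (tendsto_const_nhds.sub h2).const_mul _
  have := h1.sub h3
  simp at this
  exact this

lemma DD_nonneg : ∀ x : ℝ, 0 ≤ x → 0 ≤ DD x := by
  intro x hx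
  by_cases hA : ∀ y ∈ Set.Icc (0:ℝ) x, 0 ≤ gg y
  · have mono : MonotoneOn DD (Set.Icc 0 x) := by
      apply monotoneOn_of_deriv_nonneg (convex_Icc 0 x) DD_cont.continuousOn
      · intro y _
        exact (DD_hasDeriv y).differentiableAt.differentiableWithinAt
      · intro y hy
        rw [interior_Icc] at hy
        rw [(DD_hasDeriv y).deriv]
        have := hA y ⟨hy.1.le, hy.2.le⟩
        positivity
    have := mono (Set.left_mem_Icc.2 hx) (Set.right_mem_Icc.2 hx) hx
    rwa [DD_zero] at this
  · push_neg at hA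
    obtain ⟨y, hy, hgy⟩ := hA
    have hy0 : 0 < y := by
      rcases lt_or_eq_of_le hy.1 with h | h
      · exact h
      · exfalso; rw [← h, gg_zero] at hgy; exact absurd hgy (by norm_num)
    -- MVT: find c ∈ (0, y) with deriv gg c = gg y / y < 0
    obtain ⟨c, hc, hceq⟩ := exists_hasDerivAt_eq_slope gg
      (fun z => 2 * Real.exp (-z ^ 2 / 2) - π / 2) hy0
      gg_cont.continuousOn (fun z _ => gg_hasDeriv z)
    have hslope : 2 * Real.exp (-c ^ 2 / 2) - π / 2 < 0 := by
      rw [hceq, gg_zero, sub_zero, sub_zero]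
      exact div_neg_of_neg_of_pos hgy hy0
    -- gg is negative on [y, ∞)
    have hgneg : ∀ z, y ≤ z → gg z < 0 := by
      intro z hz
      have hanti : AntitoneOn gg (Set.Icc y z) := by
        apply antitoneOn_of_deriv_nonpos (convex_Icc y z) gg_cont.continuousOn
        · intro w _
          exact (gg_hasDeriv w).differentiableAt.differentiableWithinAt
        · intro w hw
          rw [interior_Icc] at hw
          rw [(gg_hasDeriv w).deriv]
          have hcw : c ≤ w := le_of_lt (hc.2.trans hw.1)
          have := exp_le_exp_of_sq hc.1.le hcw
          linarith
      have := hanti (Set.left_mem_Icc.2 hz) (Set.right_mem_Icc.2 hz) hz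
      linarith
    -- DD is antitone on [x, ∞), so DD x ≥ lim DD = 0
    have hge : ∀ z, x ≤ z → DD z ≤ DD x := by
      intro z hz
      have hanti : AntitoneOn DD (Set.Icc x z) := by
        apply antitoneOn_of_deriv_nonpos (convex_Icc x z) DD_cont.continuousOn
        · intro w _
          exact (DD_hasDeriv w).differentiableAt.differentiableWithinAt
        · intro w hw
          rw [interior_Icc] at hw
          rw [(DD_hasDeriv w).deriv]
          have hgw : gg w < 0 := hgneg w (le_trans hy.2 hw.1.le)
          have : 0 < Real.exp (-w ^ 2 / 2) := Real.exp_pos _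
          nlinarith
      exact hanti (Set.left_mem_Icc.2 hz) (Set.right_mem_Icc.2 hz) hz
    apply le_of_tendsto DD_tendsto
    filter_upwards [eventually_ge_atTop x] with z hz
    exact hge z hz

lemma Psi_spec {s : ℝ} (hs : s ∈ Set.Ioo (0:ℝ) 1) : Phi (Psi s) = s :=
  Function.invFun_eq (Phi_surjOn s hs)

lemma Psi_half : Psi (1/2) = 0 := by
  have h : Psi (Phi 0) = 0 := Function.leftInverse_invFun Phi_strictMono.injective 0
  rwa [Phi_zero] at h

lemma Phi_eq_half_add (t : ℝ) : Phi t = 1/2 + (Real.sqrt (2 * π))⁻¹ * II t := by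
  have h := Phi_sub (a := 0) (b := t)
  rw [Phi_zero] at h
  have h2 : (∫ s in (0:ℝ)..t, gf s) = (Real.sqrt (2 * π))⁻¹ * II t := by
    rw [II, ← intervalIntegral.integral_const_mul]
    rfl
  linarith [h, h2 ▸ h]

lemma main_ineq (t : ℝ) : 4 * (Phi t * (1 - Phi t)) ≤ Real.exp (-t ^ 2 / 2) := by
  have key : ∀ u : ℝ, 0 ≤ u → 4 * (Phi u * (1 - Phi u)) ≤ Real.exp (-u ^ 2 / 2) := by
    intro u hu
    have hD : 0 ≤ II u ^ 2 - (π / 2) * (1 - Real.exp (-u ^ 2 / 2)) := DD_nonneg u hu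
    have hPhi := Phi_eq_half_add u
    set c : ℝ := (Real.sqrt (2 * π))⁻¹ with hc
    have hc2 : c ^ 2 * (2 * π) = 1 := by
      rw [hc, inv_pow, Real.sq_sqrt (by positivity : (0:ℝ) ≤ 2 * π)]
      exact inv_mul_cancel₀ (by positivity)
    have hpi : 0 < π := Real.pi_pos
    have h4 : 0 ≤ c ^ 2 * (II u ^ 2 - (π / 2) * (1 - Real.exp (-u ^ 2 / 2))) :=
      mul_nonneg (sq_nonneg c) hD
    rw [hPhi]
    nlinarith [h4, hc2]
  rcases le_or_gt 0 t with h | h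
  · exact key t h
  · have := key (-t) (by linarith)
    rw [Phi_neg t] at this
    have h2 : (-t) ^ 2 = t ^ 2 := by ring
    rw [h2] at this
    nlinarith [this]

lemma Psi_tendsto_atBot : Tendsto Psi (nhdsWithin 0 (Set.Ioo (0:ℝ) 1)) atBot := by
  rw [tendsto_atBot]
  intro b
  have hmem : Set.Iio (Phi b) ∈ nhds (0:ℝ) := Iio_mem_nhds (Phi_pos b)
  filter_upwards [eventually_nhdsWithin_of_eventually_nhds (eventually_of_mem hmem fun s hs => hs),
    self_mem_nhdsWithin] with s hs hs'
  have h := Psi_spec hs'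
  by_contra hcon
  push_neg at hcon
  have := Phi_strictMono hcon
  rw [h] at this
  exact absurd hs (not_lt.2 this.le)

lemma Psi_tendsto_atTop : Tendsto Psi (nhdsWithin 1 (Set.Ioo (0:ℝ) 1)) atTop := by
  rw [tendsto_atTop]
  intro b
  have hmem : Set.Ioi (Phi b) ∈ nhds (1:ℝ) := Ioi_mem_nhds (Phi_lt_one b)
  filter_upwards [eventually_nhdsWithin_of_eventually_nhds (eventually_of_mem hmem fun s hs => hs),
    self_mem_nhdsWithin] with s hs hs'
  have h := Psi_spec hs'
  by_contra hcon
  push_neg at hcon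
  have := Phi_strictMono hcon
  rw [h] at this
  exact absurd hs (not_lt.2 this.le)

lemma q2_tendsto_of_psi {l : Filter ℝ} (h : Tendsto (fun s => |Psi s|) l atTop) :
    Tendsto q2 l (nhds 0) := by
  have h1 : Tendsto (fun s => -(Psi s) ^ 2 / 2) l atBot := by
    apply Tendsto.atBot_div_const (by norm_num)
    rw [tendsto_neg_atBot_iff]
    have : Tendsto (fun s => |Psi s| ^ 2) l atTop :=
      (tendsto_pow_atTop (by norm_num)).comp h
    simpa [sq_abs] using this
  have h2 : Tendsto (fun s => Real.exp (-(Psi s) ^ 2 / 2)) l (nhds 0) :=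
    Real.tendsto_exp_atBot.comp h1
  have h3 := h2.const_mul ((Real.sqrt (2 * π))⁻¹)
  rw [mul_zero] at h3
  exact h3

theorem q_dominates_parabola :
    (∀ s ∈ Set.Ioo (0 : ℝ) 1, 4 / Real.sqrt (2 * Real.pi) * (s * (1 - s)) ≤ q2 s) ∧
    q2 (1 / 2) = 1 / Real.sqrt (2 * Real.pi) ∧
    Filter.Tendsto q2 (nhdsWithin 0 (Set.Ioo (0 : ℝ) 1)) (nhds 0) ∧
    Filter.Tendsto q2 (nhdsWithin 1 (Set.Ioo (0 : ℝ) 1)) (nhds 0) := by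
  refine ⟨?_, ?_, ?_, ?_⟩
  · intro s hs
    have h := main_ineq (Psi s)
    rw [Psi_spec hs] at h
    have hc : (0:ℝ) < (Real.sqrt (2 * π))⁻¹ := inv_pos.2 sqrt2pi_pos
    have := mul_le_mul_of_nonneg_left h hc.le
    calc 4 / Real.sqrt (2 * π) * (s * (1 - s))
        = (Real.sqrt (2 * π))⁻¹ * (4 * (s * (1 - s))) := by
          rw [div_eq_mul_inv]; ring
      _ ≤ (Real.sqrt (2 * π))⁻¹ * Real.exp (-(Psi s) ^ 2 / 2) := this
      _ = q2 s := rfl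
  · rw [q2, Psi_half]
    norm_num
  · apply q2_tendsto_of_psi
    apply tendsto_abs_atBot_atTop.comp Psi_tendsto_atBot
  · apply q2_tendsto_of_psi
    apply tendsto_abs_atTop_atTop.comp Psi_tendsto_atTop
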